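/- Suppose m₀ : [0,1] → [0,∞) is nondecreasing with ∫₀¹ m₀(v) dv = 1, that γ_r ≥ γ, x_ε ≥ E(X), G(I_{0 x_ε}) ≤ 0, and that the condition K₀′(0) · ∫_{x_ε}^∞ (1 − F(x)) dx ≤ ∫₀^{x_ε} K₀(F(x)) dx holds, where K₀′(0) denotes the right derivative of K₀ at 0. Then C_VaR(I_{ab}) ≤ γ_r for every truncated stop loss contract I_{ab} with 0 ≤ a ≤ b and VaR(R_{I_{ab}}) > 0. -/

import Mathlib

open MeasureTheory Set Filter

noncomputable section

/-- Truncated stop loss contract `I_{ab}` with cut-off points `a ≤ b`. -/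
def Iab (a b x : ℝ) : ℝ := min (max (x - a) 0) (b - a)

/-- Admissible reinsurance function: `0 ≤ I x ≤ x` together with the
incentive compatible (slope) condition. -/
def Admissible (I : ℝ → ℝ) : Prop :=
  (∀ x, 0 ≤ x → 0 ≤ I x ∧ I x ≤ x) ∧
    ∀ x₁ x₂, 0 ≤ x₁ → x₁ ≤ x₂ → 0 ≤ I x₂ - I x₁ ∧ I x₂ - I x₁ ≤ x₂ - x₁

/-- Pricing kernel `K(u) = ∫_u^1 (m v - 1) dv`. -/
def Ker (m : ℝ → ℝ) (u : ℝ) : ℝ := ∫ v in u..1, (m v - 1)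

/-- Insurer's expected profit `G(I) = γ E(X) - ∫_0^∞ K(F x) I'(x) dx`. -/
def Profit (γ EX : ℝ) (K F I : ℝ → ℝ) : ℝ :=
  γ * EX - ∫ x in Ioi (0:ℝ), K (F x) * deriv I x

/-- Value at Risk of the retained risk `R_I(X) = X - I(X)` at level `ε`,
given the `(1-ε)`-quantile `xε`. -/
def VaRRet (I : ℝ → ℝ) (xε : ℝ) : ℝ := xε - I xε

/-- Conditional Value at Risk of the retained risk:
`E(X | X ≥ xε) - I(xε) - (1/ε) ∫_{xε}^∞ (1 - F x) I'(x) dx`, where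
`E(X | X ≥ xε) = xε + (1/ε) ∫_{xε}^∞ (1 - F x) dx`. -/
def CVaRRet (F I : ℝ → ℝ) (ε xε : ℝ) : ℝ :=
  (xε + ε⁻¹ * ∫ x in Ioi xε, (1 - F x)) - I xε
    - ε⁻¹ * ∫ x in Ioi xε, (1 - F x) * deriv I x

/-- Full pricing kernel `K(u) = (1+γr) K₀(u) + γr (1-u)` built from a
normalized kernel `K₀`. -/
def KFull (K₀ : ℝ → ℝ) (γr u : ℝ) : ℝ := (1 + γr) * K₀ u + γr * (1 - u)

end

section AuxLemmas

noncomputable def Mfn (m : ℝ → ℝ) (u : ℝ) : ℝ := ∫ v in (0:ℝ)..u, m v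

lemma deriv_Iab_lt {a b x : ℝ} (hx : x < a) : deriv (Iab a b) x = 0 := by
  have h : Iab a b =ᶠ[nhds x] fun _ => min 0 (b - a) := by
    filter_upwards [Iio_mem_nhds hx] with y hy
    simp [Iab, max_eq_right (by linarith [mem_Iio.mp hy] : y - a ≤ 0)]
  rw [h.deriv_eq]; exact deriv_const _ _

lemma deriv_Iab_mem {a b x : ℝ} (h1 : a < x) (h2 : x < b) : deriv (Iab a b) x = 1 := by
  have h : Iab a b =ᶠ[nhds x] fun y => y - a := by
    filter_upwards [Ioo_mem_nhds h1 h2] with y hy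
    obtain ⟨hy1, hy2⟩ := hy
    simp [Iab, max_eq_left (by linarith : (0:ℝ) ≤ y - a), min_eq_left (by linarith : y - a ≤ b - a)]
  rw [h.deriv_eq]
  simp

lemma deriv_Iab_gt {a b x : ℝ} (hab : a ≤ b) (hx : b < x) : deriv (Iab a b) x = 0 := by
  have h : Iab a b =ᶠ[nhds x] fun _ => b - a := by
    filter_upwards [Ioi_mem_nhds hx] with y hy
    have hy' : b < y := mem_Ioi.mp hy
    simp [Iab, max_eq_left (by linarith : (0:ℝ) ≤ y - a), min_eq_right (by linarith : b - a ≤ y - a)]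
  rw [h.deriv_eq]; exact deriv_const _ _

lemma profit_integral (g : ℝ → ℝ) {a b : ℝ} (ha : 0 ≤ a) (hab : a ≤ b) :
    ∫ x in Ioi (0:ℝ), g x * deriv (Iab a b) x = ∫ x in Ioo a b, g x := by
  have hae : ∀ᵐ x : ℝ, x ∉ ({a, b} : Set ℝ) := by
    have : volume ({a, b} : Set ℝ) = 0 := ((Set.finite_singleton b).insert a).measure_zero _
    exact compl_mem_ae_iff.mpr this
  have key : (fun x => g x * deriv (Iab a b) x) =ᵐ[volume.restrict (Ioi (0:ℝ))]
      (Ioo a b).indicator g := by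
    refine ae_restrict_of_ae ?_
    filter_upwards [hae] with x hx
    simp only [Set.mem_insert_iff, Set.mem_singleton_iff, not_or] at hx
    rcases lt_trichotomy x a with h | h | h
    · rw [deriv_Iab_lt h, Set.indicator_of_notMem (by simp [Set.mem_Ioo]; intro; linarith)]
      ring
    · exact absurd h hx.1
    · rcases lt_trichotomy x b with h2 | h2 | h2
      · rw [deriv_Iab_mem h h2, Set.indicator_of_mem (Set.mem_Ioo.mpr ⟨h, h2⟩)]; ring
      · exact absurd h2 hx.2
      · rw [deriv_Iab_gt hab h2, Set.indicator_of_notMem (by simp [Set.mem_Ioo]; intro; linarith)]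
        ring
  rw [integral_congr_ae key, ← integral_indicator measurableSet_Ioo]
  rw [← integral_indicator (measurableSet_Ioi)]
  congr 1
  ext x
  rw [Set.indicator_indicator]
  congr 1
  rw [Set.inter_eq_right.mpr]
  intro y hy
  exact mem_Ioi.mpr (lt_of_le_of_lt ha hy.1)

variable {m₀ : ℝ → ℝ}

lemma m_ii (hm₀int : IntervalIntegrable m₀ volume 0 1) {s t : ℝ}
    (hs : 0 ≤ s) (hs1 : s ≤ 1) (ht : 0 ≤ t) (ht1 : t ≤ 1) : IntervalIntegrable m₀ volume s t := by
  apply hm₀int.mono_set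
  rw [uIcc_of_le zero_le_one]
  rcases le_total s t with h | h
  · rw [uIcc_of_le h]; exact Icc_subset_Icc hs ht1
  · rw [uIcc_of_ge h]; exact Icc_subset_Icc ht hs1

lemma Mfn_mul_le (hm₀int : IntervalIntegrable m₀ volume 0 1)
    (hm₀mono : MonotoneOn m₀ (Icc 0 1)) {s t : ℝ} (hs : 0 ≤ s) (hst : s ≤ t) (ht : t ≤ 1) :
    t * Mfn m₀ s ≤ s * Mfn m₀ t := by
  have hs1 : s ≤ 1 := hst.trans ht
  have ht0 : 0 ≤ t := hs.trans hst
  have hiis : IntervalIntegrable m₀ volume 0 s := m_ii hm₀int le_rfl zero_le_one hs hs1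
  have hiist : IntervalIntegrable m₀ volume s t := m_ii hm₀int hs hs1 ht0 ht
  have h1 : Mfn m₀ s ≤ s * m₀ s := by
    have := intervalIntegral.integral_mono_on hs hiis intervalIntegrable_const
      (fun v hv => hm₀mono ⟨hv.1, hv.2.trans hs1⟩ ⟨hs, hs1⟩ hv.2)
    simpa [Mfn, intervalIntegral.integral_const, smul_eq_mul] using this
  have h2 : (t - s) * m₀ s ≤ Mfn m₀ t - Mfn m₀ s := by
    have heq : Mfn m₀ t - Mfn m₀ s = ∫ v in s..t, m₀ v := by
      rw [Mfn, Mfn, ← intervalIntegral.integral_add_adjacent_intervals hiis hiist]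
      ring
    rw [heq]
    have := intervalIntegral.integral_mono_on hst intervalIntegrable_const hiist
      (fun v hv => hm₀mono ⟨hs, hs1⟩ ⟨hs.trans hv.1, hv.2.trans ht⟩ hv.1)
    simpa [intervalIntegral.integral_const, smul_eq_mul] using this
  nlinarith [h1, h2]

lemma Ker_eq_sub (hm₀int : IntervalIntegrable m₀ volume 0 1)
    (hm₀norm : (∫ v in (0:ℝ)..1, m₀ v) = 1) {u : ℝ} (h0 : 0 ≤ u) (h1 : u ≤ 1) :
    Ker m₀ u = u - Mfn m₀ u := by
  have hiiu : IntervalIntegrable m₀ volume 0 u := m_ii hm₀int le_rfl zero_le_one h0 h1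
  have hiu1 : IntervalIntegrable m₀ volume u 1 := m_ii hm₀int h0 h1 zero_le_one le_rfl
  have hsplit : Mfn m₀ u + ∫ v in u..1, m₀ v = 1 := by
    rw [Mfn, intervalIntegral.integral_add_adjacent_intervals hiiu hiu1, hm₀norm]
  have : Ker m₀ u = (∫ v in u..1, m₀ v) - (1 - u) := by
    rw [Ker, intervalIntegral.integral_sub hiu1 intervalIntegrable_const]
    simp [intervalIntegral.integral_const, smul_eq_mul]
  linarith

lemma Ker_zero (hm₀int : IntervalIntegrable m₀ volume 0 1)
    (hm₀norm : (∫ v in (0:ℝ)..1, m₀ v) = 1) : Ker m₀ 0 = 0 := by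
  rw [Ker_eq_sub hm₀int hm₀norm le_rfl zero_le_one, Mfn, intervalIntegral.integral_same]
  ring

lemma Ker_nonneg (hm₀int : IntervalIntegrable m₀ volume 0 1)
    (hm₀mono : MonotoneOn m₀ (Icc 0 1))
    (hm₀norm : (∫ v in (0:ℝ)..1, m₀ v) = 1) {u : ℝ} (h0 : 0 ≤ u) (h1 : u ≤ 1) :
    0 ≤ Ker m₀ u := by
  have := Mfn_mul_le hm₀int hm₀mono h0 h1 le_rfl
  rw [Ker_eq_sub hm₀int hm₀norm h0 h1]
  have hM1 : Mfn m₀ 1 = 1 := hm₀norm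
  nlinarith

lemma Ker_le_d0 (hm₀int : IntervalIntegrable m₀ volume 0 1)
    (hm₀mono : MonotoneOn m₀ (Icc 0 1))
    (hm₀norm : (∫ v in (0:ℝ)..1, m₀ v) = 1) {d0 : ℝ}
    (hd0 : HasDerivWithinAt (Ker m₀) d0 (Ici 0) 0) {u : ℝ} (h0 : 0 ≤ u) (h1 : u ≤ 1) :
    Ker m₀ u ≤ d0 * u := by
  rcases eq_or_lt_of_le h0 with h | h
  · rw [← h, Ker_zero hm₀int hm₀norm]; ring_nf; simp
  have hK0 : Ker m₀ 0 = 0 := Ker_zero hm₀int hm₀norm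
  have hslope : Tendsto (slope (Ker m₀) 0) (nhdsWithin 0 (Ioi 0)) (nhds d0) := by
    have := hasDerivWithinAt_iff_tendsto_slope.mp hd0
    rwa [Set.Ici_sdiff_left] at this
  have hdiv : Ker m₀ u / u ≤ d0 := by
    refine ge_of_tendsto hslope ?_
    filter_upwards [self_mem_nhdsWithin,
      mem_nhdsWithin_of_mem_nhds (Iio_mem_nhds h)] with t ht ht'
    have ht0 : 0 < t := ht
    have htu : t ≤ u := le_of_lt ht'
    have hsl : slope (Ker m₀) 0 t = Ker m₀ t / t := by
      rw [slope_def_field, hK0]; simp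
    rw [hsl]
    have key : u * Mfn m₀ t ≤ t * Mfn m₀ u := Mfn_mul_le hm₀int hm₀mono (le_of_lt ht0) htu h1
    rw [Ker_eq_sub hm₀int hm₀norm h0 h1, Ker_eq_sub hm₀int hm₀norm (le_of_lt ht0) (htu.trans h1)]
    rw [div_le_div_iff₀ h ht0]
    nlinarith
  calc Ker m₀ u = (Ker m₀ u / u) * u := by field_simp
    _ ≤ d0 * u := by apply mul_le_mul_of_nonneg_right hdiv h0

lemma Mfn_contOn (hm₀int : IntervalIntegrable m₀ volume 0 1) :
    ContinuousOn (Mfn m₀) (Icc 0 1) := by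
  have h : IntegrableOn m₀ (uIcc 0 1) := by
    rw [uIcc_of_le zero_le_one]
    exact (intervalIntegrable_iff_integrableOn_Icc_of_le zero_le_one).mp hm₀int
  have := intervalIntegral.continuousOn_primitive_interval (a := 0) (b := 1) h
  rwa [uIcc_of_le zero_le_one] at this

lemma Ker_contOn (hm₀int : IntervalIntegrable m₀ volume 0 1)
    (hm₀norm : (∫ v in (0:ℝ)..1, m₀ v) = 1) :
    ContinuousOn (Ker m₀) (Icc 0 1) := by
  refine ContinuousOn.congr (continuousOn_id.sub (Mfn_contOn hm₀int)) ?_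
  intro u hu
  exact Ker_eq_sub hm₀int hm₀norm hu.1 hu.2

end AuxLemmas

/-- Lemma 1 (VaR): under the normalized monotone market factor model with
`γ_r ≥ γ`, `xε ≥ E(X)`, `G(I_{0 xε}) ≤ 0` and condition (e33), the VaR-ratio
of every truncated stop loss contract is at most `γ_r`. -/
theorem truncated_stop_loss_ratio_le_VaR
    (F m₀ : ℝ → ℝ) (γ γr ε xε d0 : ℝ)
    (hγ : 0 < γ) (hε : ε ∈ Ioo (0:ℝ) 1)
    (hF0 : F 0 = 0) (hFc : Continuous F) (hFm : StrictMonoOn F (Ici 0))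
    (hFlim : Tendsto F atTop (nhds 1))
    (hEXint : IntegrableOn (fun x => 1 - F x) (Ioi 0))
    (hxε : 0 ≤ xε) (hq : F xε = 1 - ε)
    (hm₀nn : ∀ v ∈ Icc (0:ℝ) 1, 0 ≤ m₀ v)
    (hm₀int : IntervalIntegrable m₀ volume 0 1)
    (hm₀mono : MonotoneOn m₀ (Icc 0 1))
    (hm₀norm : (∫ v in (0:ℝ)..1, m₀ v) = 1)
    (hγr : γ ≤ γr)
    (hxεEX : (∫ x in Ioi (0:ℝ), (1 - F x)) ≤ xε)
    (hG0 : Profit γ (∫ x in Ioi (0:ℝ), (1 - F x)) (KFull (Ker m₀) γr) F (Iab 0 xε) ≤ 0)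
    (hd0 : HasDerivWithinAt (Ker m₀) d0 (Ici 0) 0)
    (hcond : d0 * (∫ x in Ioi xε, (1 - F x)) ≤ ∫ x in (0:ℝ)..xε, Ker m₀ (F x))
 :
    ∀ a b : ℝ, 0 ≤ a → a ≤ b → 0 < VaRRet (Iab a b) xε →
      Profit γ (∫ x in Ioi (0:ℝ), (1 - F x)) (KFull (Ker m₀) γr) F (Iab a b) / VaRRet (Iab a b) xε ≤ γr := by
  intro a b ha hab hV
  set EX := ∫ x in Ioi (0:ℝ), (1 - F x) with hEX
  set T := ∫ x in Ioi xε, (1 - F x) with hT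
  set KK := fun x => KFull (Ker m₀) γr (F x) with hKK
  set KerF := fun x => Ker m₀ (F x) with hKerF
  have hγr0 : 0 < γr := lt_of_lt_of_le hγ hγr
  have h1γr : (0:ℝ) < 1 + γr := by linarith
  -- F bounds
  have hFmono : MonotoneOn F (Ici 0) := hFm.monotoneOn
  have hFnn : ∀ x, 0 ≤ x → 0 ≤ F x := fun x hx => hF0 ▸ hFmono self_mem_Ici hx hx
  have hFle1 : ∀ x, 0 ≤ x → F x ≤ 1 := by
    intro x hx
    refine ge_of_tendsto hFlim ?_
    filter_upwards [eventually_ge_atTop x] with y hy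
    exact hFmono hx (le_trans hx hy) hy
  have hMaps : MapsTo F (Ici 0) (Icc 0 1) := fun x hx => ⟨hFnn x hx, hFle1 x hx⟩
  -- continuity / integrability
  have hKerFc : ContinuousOn KerF (Ici 0) :=
    (Ker_contOn hm₀int hm₀norm).comp hFc.continuousOn hMaps
  have hKKc : ContinuousOn KK (Ici 0) := by
    have : ContinuousOn (fun x => (1 + γr) * KerF x + γr * (1 - F x)) (Ici 0) :=
      (continuousOn_const.mul hKerFc).add
        (continuousOn_const.mul (continuousOn_const.sub hFc.continuousOn))
    exact this.congr fun x _ => rfl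
  have hsub : ∀ {p q : ℝ}, 0 ≤ p → 0 ≤ q → uIcc p q ⊆ Ici 0 := by
    intro p q hp hq x hx
    exact le_trans (le_min hp hq) hx.1
  have hII : ∀ (g : ℝ → ℝ), ContinuousOn g (Ici 0) → ∀ p q : ℝ, 0 ≤ p → 0 ≤ q →
      IntervalIntegrable g volume p q := fun g hg p q hp hq =>
    (hg.mono (hsub hp hq)).intervalIntegrable
  have hFcOn : ContinuousOn F (Ici 0) := hFc.continuousOn
  have h1Fc : ContinuousOn (fun x => 1 - F x) (Ici 0) :=
    continuousOn_const.sub hFcOn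
  -- pointwise bounds
  have hKernn : ∀ x, 0 ≤ x → 0 ≤ KerF x := fun x hx =>
    Ker_nonneg hm₀int hm₀mono hm₀norm (hFnn x hx) (hFle1 x hx)
  have hKerle : ∀ x, 0 ≤ x → KerF x ≤ d0 * F x := fun x hx =>
    Ker_le_d0 hm₀int hm₀mono hm₀norm hd0 (hFnn x hx) (hFle1 x hx)
  have hKKnn : ∀ x, 0 ≤ x → 0 ≤ KK x := by
    intro x hx
    have := hKernn x hx
    have h2 : 0 ≤ 1 - F x := by linarith [hFle1 x hx]
    show 0 ≤ (1 + γr) * Ker m₀ (F x) + γr * (1 - F x)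
    positivity
  -- profit as interval integral
  have hIoo : ∀ (g : ℝ → ℝ) {p q : ℝ}, p ≤ q → ∫ x in Ioo p q, g x = ∫ x in p..q, g x := by
    intro g p q h
    rw [intervalIntegral.integral_of_le h, integral_Ioc_eq_integral_Ioo]
  have hProf : ∀ {p q : ℝ}, 0 ≤ p → p ≤ q →
      Profit γ EX (KFull (Ker m₀) γr) F (Iab p q) = γ * EX - ∫ x in p..q, KK x := by
    intro p q hp hpq
    rw [Profit, profit_integral KK hp hpq, hIoo KK hpq]
  -- VaR computation
  set a' := min a xε with ha'
  set b' := min b xε with hb'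
  have ha'0 : 0 ≤ a' := le_min ha hxε
  have ha'b' : a' ≤ b' := min_le_min hab le_rfl
  have hb'xε : b' ≤ xε := min_le_right _ _
  have ha'xε : a' ≤ xε := le_trans ha'b' hb'xε
  have hIabxε : Iab a b xε = b' - a' := by
    rcases le_total a xε with h | h
    · have h1 : max (xε - a) 0 = xε - a := max_eq_left (by linarith)
      rcases le_total b xε with h2 | h2
      · have : a' = a := min_eq_left h
        have hb : b' = b := min_eq_left h2
        simp only [Iab, h1, this, hb]
        exact min_eq_right (by linarith)
      · have : a' = a := min_eq_left h
        have hb : b' = xε := min_eq_right h2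
        simp only [Iab, h1, this, hb]
        exact min_eq_left (by linarith)
    · have h1 : max (xε - a) 0 = 0 := max_eq_right (by linarith)
      have ha2 : a' = xε := min_eq_right h
      have hb2 : b' = xε := min_eq_right (le_trans h hab)
      simp only [Iab, h1, ha2, hb2]
      simp
      linarith
  have hVeq : VaRRet (Iab a b) xε = xε - b' + a' := by
    rw [VaRRet, hIabxε]; ring
  -- reduce to the main inequality
  rw [div_le_iff₀ hV, hProf ha hab]
  -- ∫_{a'}^{b'} KK ≤ ∫_a^b KK
  have hstep1 : (∫ x in a'..b', KK x) ≤ ∫ x in a..b, KK x := by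
    rcases le_total b xε with h2 | h2
    · have e1 : a' = a := min_eq_left (le_trans hab h2)
      have e2 : b' = b := min_eq_left h2
      rw [e1, e2]
    · rcases le_total a xε with h | h
      · have e1 : a' = a := min_eq_left h
        have e2 : b' = xε := min_eq_right h2
        rw [e1, e2]
        have hsplit : (∫ x in a..xε, KK x) + ∫ x in xε..b, KK x = ∫ x in a..b, KK x :=
          intervalIntegral.integral_add_adjacent_intervals
            (hII KK hKKc a xε ha hxε) (hII KK hKKc xε b hxε (le_trans ha (le_trans h h2)))
        have hnn : 0 ≤ ∫ x in xε..b, KK x :=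
          intervalIntegral.integral_nonneg h2 (fun u hu => hKKnn u (le_trans hxε hu.1))
        linarith
      · have e1 : a' = xε := min_eq_right h
        have e2 : b' = xε := min_eq_right (le_trans h hab)
        rw [e1, e2, intervalIntegral.integral_same]
        exact intervalIntegral.integral_nonneg hab (fun u hu => hKKnn u (le_trans ha hu.1))
  rw [hVeq] at hV ⊢
  -- main claim : γ * EX ≤ ∫_{a'}^{b'} KK + γr * (xε - b' + a')
  have hG0' : γ * EX ≤ ∫ x in (0:ℝ)..xε, KK x := by
    have := hProf (le_refl (0:ℝ)) hxε
    rw [this] at hG0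
    linarith
  -- splitting of interval integrals at a' and b'
  have hsplitKK : (∫ x in (0:ℝ)..xε, KK x)
      = (∫ x in (0:ℝ)..a', KK x) + (∫ x in a'..b', KK x) + ∫ x in b'..xε, KK x := by
    rw [intervalIntegral.integral_add_adjacent_intervals (hII KK hKKc 0 a' le_rfl ha'0)
        (hII KK hKKc a' b' ha'0 (le_trans ha'0 ha'b')),
      intervalIntegral.integral_add_adjacent_intervals (hII KK hKKc 0 b' le_rfl (le_trans ha'0 ha'b'))
        (hII KK hKKc b' xε (le_trans ha'0 ha'b') hxε)]
  have hclaim : γ * EX ≤ (∫ x in a'..b', KK x) + γr * (xε - b' + a') := by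
    rcases le_total ((1 + γr) * d0) γr with hroute | hroute
    · -- route 1 : pointwise KK ≤ γr together with hG0'
      have hKKle : ∀ x, 0 ≤ x → KK x ≤ γr := by
        intro x hx
        have h1 := hKerle x hx
        have h2 := hFnn x hx
        have h3 := hFle1 x hx
        show (1 + γr) * Ker m₀ (F x) + γr * (1 - F x) ≤ γr
        nlinarith [mul_le_mul_of_nonneg_left h1 (le_of_lt h1γr)]
      have hb1 : (∫ x in (0:ℝ)..a', KK x) ≤ γr * a' := by
        have := intervalIntegral.integral_mono_on ha'0 (hII KK hKKc 0 a' le_rfl ha'0)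
          intervalIntegrable_const (fun u hu => hKKle u hu.1)
        simpa [smul_eq_mul, mul_comm] using this
      have hb2 : (∫ x in b'..xε, KK x) ≤ γr * (xε - b') := by
        have hb'0 : 0 ≤ b' := le_trans ha'0 ha'b'
        have := intervalIntegral.integral_mono_on hb'xε (hII KK hKKc b' xε hb'0 hxε)
          intervalIntegrable_const (fun u hu => hKKle u (le_trans hb'0 hu.1))
        simpa [smul_eq_mul, mul_comm] using this
      linarith [hG0', hsplitKK]
    · -- route 2 : γ ≤ γr and condition e33
      have hb'0 : 0 ≤ b' := le_trans ha'0 ha'b'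
      have hEXnn : 0 ≤ EX := setIntegral_nonneg measurableSet_Ioi
        (fun x hx => by have := hFle1 x (le_of_lt hx); simp; linarith)
      have hTnn : 0 ≤ T := setIntegral_nonneg measurableSet_Ioi
        (fun x hx => by have := hFle1 x (le_trans hxε (le_of_lt hx)); simp; linarith)
      have hγEX : γ * EX ≤ γr * EX := mul_le_mul_of_nonneg_right hγr hEXnn
      have hEXsplit : EX = (∫ x in (0:ℝ)..xε, (1 - F x)) + T := by
        rw [hEX, hT, intervalIntegral.integral_of_le hxε,
          ← setIntegral_union (Ioc_disjoint_Ioi le_rfl) measurableSet_Ioi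
            (hEXint.mono_set Ioc_subset_Ioi_self) (hEXint.mono_set (Ioi_subset_Ioi hxε)),
          Ioc_union_Ioi_eq_Ioi hxε]
      have hone : ∀ p q : ℝ, 0 ≤ p → 0 ≤ q →
          (∫ x in p..q, (1 - F x)) = (q - p) - ∫ x in p..q, F x := by
        intro p q hp hq
        rw [intervalIntegral.integral_sub intervalIntegrable_const (hII F hFcOn p q hp hq)]
        simp
      set S1 := ∫ x in (0:ℝ)..a', F x with hS1
      set S2 := ∫ x in b'..xε, F x with hS2
      set J := ∫ x in a'..b', KerF x with hJ
      set R := ∫ x in a'..b', (1 - F x) with hR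
      set A := ∫ x in (0:ℝ)..xε, KerF x with hA
      have hS1nn : 0 ≤ S1 := intervalIntegral.integral_nonneg ha'0
        (fun u hu => hFnn u hu.1)
      have hS2nn : 0 ≤ S2 := intervalIntegral.integral_nonneg hb'xε
        (fun u hu => hFnn u (le_trans hb'0 hu.1))
      have hA3 : A = (∫ x in (0:ℝ)..a', KerF x) + J + ∫ x in b'..xε, KerF x := by
        rw [hA, hJ, intervalIntegral.integral_add_adjacent_intervals
            (hII KerF hKerFc 0 a' le_rfl ha'0) (hII KerF hKerFc a' b' ha'0 hb'0),
          intervalIntegral.integral_add_adjacent_intervals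
            (hII KerF hKerFc 0 b' le_rfl hb'0) (hII KerF hKerFc b' xε hb'0 hxε)]
      have hA1 : (∫ x in (0:ℝ)..a', KerF x) ≤ d0 * S1 := by
        have h := intervalIntegral.integral_mono_on ha'0 (hII KerF hKerFc 0 a' le_rfl ha'0)
          ((hII F hFcOn 0 a' le_rfl ha'0).const_mul d0) (fun u hu => hKerle u hu.1)
        rwa [intervalIntegral.integral_const_mul] at h
      have hA2 : (∫ x in b'..xε, KerF x) ≤ d0 * S2 := by
        have h := intervalIntegral.integral_mono_on hb'xε (hII KerF hKerFc b' xε hb'0 hxε)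
          ((hII F hFcOn b' xε hb'0 hxε).const_mul d0)
          (fun u hu => hKerle u (le_trans hb'0 hu.1))
        rwa [intervalIntegral.integral_const_mul] at h
      have hA4 : 0 ≤ J := intervalIntegral.integral_nonneg ha'b'
        (fun u hu => hKernn u (le_trans ha'0 hu.1))
      have hIKK : (∫ x in a'..b', KK x) = (1 + γr) * J + γr * R := by
        have heq : (∫ x in a'..b', KK x)
            = ∫ x in a'..b', ((1 + γr) * KerF x + γr * (1 - F x)) := rfl
        rw [heq, intervalIntegral.integral_add ((hII KerF hKerFc a' b' ha'0 hb'0).const_mul _)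
            ((hII _ h1Fc a' b' ha'0 hb'0).const_mul _),
          intervalIntegral.integral_const_mul, intervalIntegral.integral_const_mul]
      have hsplit1F : (∫ x in (0:ℝ)..xε, (1 - F x))
          = (∫ x in (0:ℝ)..a', (1 - F x)) + R + ∫ x in b'..xε, (1 - F x) := by
        rw [hR, intervalIntegral.integral_add_adjacent_intervals
            (hII _ h1Fc 0 a' le_rfl ha'0) (hII _ h1Fc a' b' ha'0 hb'0),
          intervalIntegral.integral_add_adjacent_intervals
            (hII _ h1Fc 0 b' le_rfl hb'0) (hII _ h1Fc b' xε hb'0 hxε)]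
      have e1 : (∫ x in (0:ℝ)..a', (1 - F x)) = a' - S1 := by
        rw [hone 0 a' le_rfl ha'0]; ring_nf; rfl
      have e2 : (∫ x in b'..xε, (1 - F x)) = (xε - b') - S2 := hone b' xε hb'0 hxε
      have key : γr * (T - S1 - S2) ≤ (1 + γr) * J := by
        rcases le_total T (S1 + S2) with hc | hc
        · have k0 : γr * (T - S1 - S2) ≤ 0 :=
            mul_nonpos_of_nonneg_of_nonpos hγr0.le (by linarith)
          have k1 : 0 ≤ (1 + γr) * J := mul_nonneg h1γr.le hA4
          linarith
        · have hd : d0 * T - d0 * S1 - d0 * S2 ≤ J := by linarith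
          have k1 : γr * (T - S1 - S2) ≤ (1 + γr) * d0 * (T - S1 - S2) :=
            mul_le_mul_of_nonneg_right hroute (by linarith)
          have k2 : (1 + γr) * (d0 * T - d0 * S1 - d0 * S2) ≤ (1 + γr) * J :=
            mul_le_mul_of_nonneg_left hd h1γr.le
          have k3 : (1 + γr) * d0 * (T - S1 - S2)
              = (1 + γr) * (d0 * T - d0 * S1 - d0 * S2) := by ring
          linarith
      rw [hIKK]
      have hEXeq : EX = (a' - S1) + R + ((xε - b') - S2) + T := by
        rw [hEXsplit, hsplit1F, e1, e2]
      have hfin : γr * EX = γr * (xε - b' + a') + γr * R + γr * (T - S1 - S2) := by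
        rw [hEXeq]; ring
      linarith
  nlinarith [hstep1, hclaim]
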